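/- arXiv:2301.08311 — 2 statements merged into one kernel-verified Lean document; each statement's English description precedes it below -/
import Mathlib

section
/- Let δ > 0 and p ∈ (1,∞). On the half-line [0,∞), the inclusion of the weighted Sobolev space W^{1,p,δ}([0,∞)) = {f ∈ W^{1,p}_loc : ∫ (|f|^p + |f'|^p) e^{pδs} ds < ∞} into the unweighted L^p([0,∞)) is a compact operator. -/
open MeasureTheory Set Filter Topology

namespace WSCE

lemma memLp_of_integrable_rpow {α : Type*} [MeasurableSpace α] {μ : Measure α}
    {E : Type*} [NormedAddCommGroup E]
    {p : ℝ} (hp : 0 < p) {f : α → E} (hf : AEStronglyMeasurable f μ)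
    (hi : Integrable (fun x => ‖f x‖ ^ p) μ) :
    MemLp f (ENNReal.ofReal p) μ := by
  have h1 : (ENNReal.ofReal p) ≠ 0 := by
    simp [ENNReal.ofReal_eq_zero, not_le, hp]
  have h2 : (ENNReal.ofReal p) ≠ ⊤ := ENNReal.ofReal_ne_top
  have h3 := memLp_norm_rpow_iff (q := ENNReal.ofReal p) (p := ENNReal.ofReal p) hf h1 h2
  rw [ENNReal.div_self h1 h2] at h3
  rw [← h3, ENNReal.toReal_ofReal hp.le]
  exact memLp_one_iff_integrable.mpr hi

lemma integrable_mono_real {α : Type*} [MeasurableSpace α] {μ : Measure α}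
    {g h : α → ℝ} (hg : Integrable g μ) (hm : AEStronglyMeasurable h μ)
    (h0 : ∀ᵐ s ∂μ, 0 ≤ h s) (hb : ∀ᵐ s ∂μ, h s ≤ g s) : Integrable h μ := by
  refine hg.mono hm ?_
  filter_upwards [h0, hb] with s h0s hbs
  rw [Real.norm_eq_abs, Real.norm_eq_abs, abs_of_nonneg h0s,
    abs_of_nonneg (h0s.trans hbs)]
  exact hbs

lemma holder_decay {p q δ C : ℝ} (hpq : p.HolderConjugate q) (hδ : 0 < δ)
    {v : ℝ → ℝ} {a b : ℝ}
    (hmeas : AEStronglyMeasurable v (volume.restrict (Ioc a b)))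
    (hv : ∀ s, 0 ≤ v s)
    (hint : IntegrableOn (fun s => v s ^ p * Real.exp (p * δ * s)) (Ioc a b))
    (hC : ∫ s in Ioc a b, v s ^ p * Real.exp (p * δ * s) ≤ C) :
    ∫ s in Ioc a b, v s ≤ C ^ (1/p) * ((q*δ)⁻¹) ^ (1/q) * Real.exp (-(δ*a)) := by
  have hp0 : 0 < p := hpq.pos
  have hq0 : 0 < q := hpq.symm.pos
  have hqδ : 0 < q * δ := mul_pos hq0 hδ
  set μab := volume.restrict (Ioc a b) with hμab
  set F : ℝ → ℝ := fun s => v s * Real.exp (δ * s) with hF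
  set G : ℝ → ℝ := fun s => Real.exp (-(δ * s)) with hG
  have hFp : ∀ s, F s ^ p = v s ^ p * Real.exp (p * δ * s) := by
    intro s
    rw [hF, Real.mul_rpow (hv s) (Real.exp_pos _).le, ← Real.exp_mul]
    ring_nf
  have hGq : ∀ s, G s ^ q = Real.exp (-(q * δ) * s) := by
    intro s
    rw [hG, ← Real.exp_mul]
    ring_nf
  have hFmem : MemLp F (ENNReal.ofReal p) μab := by
    refine memLp_of_integrable_rpow hp0 (hmeas.mul ?_) ?_
    · exact (Real.continuous_exp.comp (continuous_const.mul continuous_id)).aestronglyMeasurable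
    · refine hint.congr (Eventually.of_forall fun s => ?_)
      show v s ^ p * Real.exp (p * δ * s) = ‖F s‖ ^ p
      rw [Real.norm_eq_abs, abs_of_nonneg (mul_nonneg (hv s) (Real.exp_pos _).le), hFp s]
  have hGmem : MemLp G (ENNReal.ofReal q) μab := by
    refine memLp_of_integrable_rpow hq0 ?_ ?_
    · exact (Real.continuous_exp.comp (continuous_const.mul continuous_id).neg).aestronglyMeasurable
    · have : IntegrableOn (fun s => Real.exp (-(q*δ) * s)) (Ioc a b) :=
        ((Real.continuous_exp.comp (continuous_const.mul continuous_id)).integrableOn_Ioc)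
      refine this.congr (Eventually.of_forall fun s => ?_)
      show Real.exp (-(q*δ) * s) = ‖G s‖ ^ q
      rw [Real.norm_eq_abs, abs_of_nonneg (Real.exp_pos _).le, hGq s]
  have hmain := integral_mul_le_Lp_mul_Lq_of_nonneg (μ := μab) hpq
    (Eventually.of_forall fun s => mul_nonneg (hv s) (Real.exp_pos _).le)
    (Eventually.of_forall fun s => (Real.exp_pos _).le) hFmem hGmem
  have hFG : ∀ s, F s * G s = v s := by
    intro s
    rw [hF, hG, mul_assoc, ← Real.exp_add]
    simp
  have hL : ∫ s, F s * G s ∂μab = ∫ s in Ioc a b, v s :=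
    integral_congr_ae (Eventually.of_forall hFG)
  have h1 : (∫ s, F s ^ p ∂μab) ^ (1/p) ≤ C ^ (1/p) := by
    refine Real.rpow_le_rpow (integral_nonneg fun s => Real.rpow_nonneg
      (mul_nonneg (hv s) (Real.exp_pos _).le) _) ?_ (one_div_nonneg.mpr hp0.le)
    calc ∫ s, F s ^ p ∂μab = ∫ s in Ioc a b, v s ^ p * Real.exp (p * δ * s) :=
          integral_congr_ae (Eventually.of_forall hFp)
      _ ≤ C := hC
  have h2 : (∫ s, G s ^ q ∂μab) ^ (1/q) ≤ ((q*δ)⁻¹) ^ (1/q) * Real.exp (-(δ*a)) := by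
    have hval : ∫ x in Ioi a, Real.exp (-(q*δ) * x) = (q*δ)⁻¹ * Real.exp (-(q*δ*a)) := by
      have := integral_comp_mul_left_Ioi (fun x => Real.exp (-x)) a hqδ
      simp only [smul_eq_mul] at this
      rw [show (fun x : ℝ => Real.exp (-(q*δ) * x)) = fun x : ℝ => Real.exp (-(q*δ*x)) by
        funext x; ring_nf]
      rw [this, integral_exp_neg_Ioi]
    have hle : ∫ s, G s ^ q ∂μab ≤ (q*δ)⁻¹ * Real.exp (-(q*δ*a)) := by
      rw [show ∫ s, G s ^ q ∂μab = ∫ s in Ioc a b, Real.exp (-(q*δ) * s) from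
        integral_congr_ae (Eventually.of_forall hGq), ← hval]
      refine setIntegral_mono_set (exp_neg_integrableOn_Ioi a hqδ)
        (Eventually.of_forall fun s => (Real.exp_pos _).le) ?_
      exact HasSubset.Subset.eventuallyLE Ioc_subset_Ioi_self
    have h3 : ((q*δ)⁻¹ * Real.exp (-(q*δ*a))) ^ (1/q) = ((q*δ)⁻¹) ^ (1/q) * Real.exp (-(δ*a)) := by
      rw [Real.mul_rpow (inv_nonneg.mpr hqδ.le) (Real.exp_pos _).le, ← Real.exp_mul]
      congr 1
      field_simp
    rw [← h3]
    refine Real.rpow_le_rpow (integral_nonneg fun s => Real.rpow_nonneg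
      (Real.exp_pos _).le _) hle (one_div_nonneg.mpr hq0.le)
  calc ∫ s in Ioc a b, v s = ∫ s, F s * G s ∂μab := hL.symm
    _ ≤ (∫ s, F s ^ p ∂μab) ^ (1/p) * (∫ s, G s ^ q ∂μab) ^ (1/q) := hmain
    _ ≤ (C ^ (1/p)) * (((q*δ)⁻¹) ^ (1/q) * Real.exp (-(δ*a))) := by
        have hC0 : 0 ≤ C := le_trans (integral_nonneg fun s =>
          mul_nonneg (Real.rpow_nonneg (hv s) _) (Real.exp_pos _).le) hC
        refine mul_le_mul h1 h2 (Real.rpow_nonneg (integral_nonneg fun s =>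
          Real.rpow_nonneg (Real.exp_pos _).le _) _) (Real.rpow_nonneg hC0 _)
    _ = C ^ (1/p) * ((q*δ)⁻¹) ^ (1/q) * Real.exp (-(δ*a)) := by ring

lemma holder_flat {p q C : ℝ} (hpq : p.HolderConjugate q)
    {v : ℝ → ℝ} {a b : ℝ} (hab : a ≤ b)
    (hmeas : AEStronglyMeasurable v (volume.restrict (Ioc a b)))
    (hv : ∀ s, 0 ≤ v s)
    (hint : IntegrableOn (fun s => v s ^ p) (Ioc a b))
    (hC : ∫ s in Ioc a b, v s ^ p ≤ C) :
    ∫ s in Ioc a b, v s ≤ C ^ (1/p) * (b - a) ^ (1/q) := by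
  have hp0 : 0 < p := hpq.pos
  have hq0 : 0 < q := hpq.symm.pos
  set μab := volume.restrict (Ioc a b) with hμab
  haveI : IsFiniteMeasure μab := ⟨by
    rw [hμab, Measure.restrict_apply_univ]; exact measure_Ioc_lt_top⟩
  have hVmem : MemLp v (ENNReal.ofReal p) μab := by
    refine memLp_of_integrable_rpow hp0 hmeas (hint.congr (Eventually.of_forall fun s => ?_))
    show v s ^ p = ‖v s‖ ^ p
    rw [Real.norm_eq_abs, abs_of_nonneg (hv s)]
  have hOmem : MemLp (fun _ : ℝ => (1:ℝ)) (ENNReal.ofReal q) μab := memLp_const 1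
  have hmain := integral_mul_le_Lp_mul_Lq_of_nonneg (μ := μab) hpq
    (Eventually.of_forall hv) (Eventually.of_forall fun _ => zero_le_one) hVmem hOmem
  simp only [mul_one, Real.one_rpow] at hmain
  have hone : ∫ _ : ℝ, (1:ℝ) ∂μab = b - a := by
    rw [hμab, setIntegral_const, Real.volume_real_Ioc, smul_eq_mul, mul_one,
      max_eq_left (sub_nonneg.mpr hab)]
  rw [hone] at hmain
  refine hmain.trans ?_
  refine mul_le_mul_of_nonneg_right ?_ (Real.rpow_nonneg (sub_nonneg.mpr hab) _)
  exact Real.rpow_le_rpow (integral_nonneg fun s => Real.rpow_nonneg (hv s) _) hC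
    (one_div_nonneg.mpr hp0.le)

/-- Integrability of the plain norm from weighted `p`-integrability. -/
lemma integrable_norm_of_rpow {p δ a b : ℝ} (hp : 1 < p) (hδ : 0 < δ) (ha : 0 ≤ a) {w : ℝ → ℂ}
    (hw : AEStronglyMeasurable (fun s => ‖w s‖) (volume.restrict (Ioc a b)))
    (hg : IntegrableOn (fun s => ‖w s‖ ^ p * Real.exp (p * δ * s)) (Ioc a b)) :
    IntegrableOn (fun s => ‖w s‖) (Ioc a b) := by
  have hg' : IntegrableOn (fun s => 1 + ‖w s‖ ^ p * Real.exp (p*δ*s)) (Ioc a b) :=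
    (integrableOn_const measure_Ioc_lt_top.ne).add hg
  refine integrable_mono_real hg' hw (Eventually.of_forall fun s => norm_nonneg _) ?_
  filter_upwards [ae_restrict_mem measurableSet_Ioc] with s hs
  have hs0 : (0:ℝ) ≤ s := ha.trans hs.1.le
  have he : 1 ≤ Real.exp (p*δ*s) := by
    rw [← Real.exp_zero]
    exact Real.exp_le_exp.mpr (mul_nonneg (mul_nonneg (by linarith) hδ.le) hs0)
  rcases le_or_gt (‖w s‖) 1 with h1 | h1
  · nlinarith [Real.rpow_nonneg (norm_nonneg (w s)) p]
  · have h2 : ‖w s‖ ≤ ‖w s‖ ^ p := by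
      nth_rewrite 1 [← Real.rpow_one (‖w s‖)]
      exact Real.rpow_le_rpow_of_exponent_le h1.le (by linarith)
    nlinarith [Real.rpow_nonneg (norm_nonneg (w s)) p]

end WSCE

open WSCE

/-- **Compactness of the inclusion `W^{1,p,δ}([0,∞)) ↪ L^p([0,∞))` for `δ > 0`.**
Every sequence bounded in the weighted Sobolev norm has a subsequence converging
in the unweighted `L^p` norm on `(0,∞)`. -/
theorem weighted_sobolev_compact_embedding
    (p δ : ℝ) (hp : 1 < p) (hδ : 0 < δ) (C : ℝ)
    (f : ℕ → ℝ → ℂ)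
    (hdiff : ∀ k, Differentiable ℝ (f k))
    (hint : ∀ k, IntegrableOn
      (fun s => (‖f k s‖ ^ p + ‖deriv (f k) s‖ ^ p) * Real.exp (p * δ * s))
      (Set.Ioi (0 : ℝ)) volume)
    (hbdd : ∀ k, ∫ s in Set.Ioi (0 : ℝ),
      (‖f k s‖ ^ p + ‖deriv (f k) s‖ ^ p) * Real.exp (p * δ * s) ≤ C) :
    ∃ φ : ℕ → ℕ, StrictMono φ ∧ ∃ g : ℝ → ℂ,
      MemLp g (ENNReal.ofReal p) (volume.restrict (Set.Ioi (0 : ℝ))) ∧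
      Filter.Tendsto
        (fun k => eLpNorm (f (φ k) - g) (ENNReal.ofReal p)
          (volume.restrict (Set.Ioi (0 : ℝ))))
        Filter.atTop (nhds 0) := by
  have hp0 : 0 < p := lt_trans one_pos hp
  set q : ℝ := p / (p - 1) with hqdef
  have hpq : p.HolderConjugate q := (Real.holderConjugate_iff_eq_conjExponent hp).mpr rfl
  have hq0 : 0 < q := hpq.symm.pos
  have hqδ : 0 < q * δ := mul_pos hq0 hδ
  have hC0 : 0 ≤ C := le_trans (integral_nonneg fun s => mul_nonneg
    (add_nonneg (Real.rpow_nonneg (norm_nonneg _) _) (Real.rpow_nonneg (norm_nonneg _) _))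
    (Real.exp_pos _).le) (hbdd 0)
  -- measurability
  have hmes_d : ∀ k (μ : Measure ℝ), AEStronglyMeasurable (fun s => ‖deriv (f k) s‖) μ :=
    fun k μ => (aestronglyMeasurable_deriv (f k) μ).norm
  have hmes_f : ∀ k (μ : Measure ℝ), AEStronglyMeasurable (fun s => ‖f k s‖) μ :=
    fun k μ => ((hdiff k).continuous.norm).aestronglyMeasurable
  have hexp_cont : Continuous (fun s : ℝ => Real.exp (p * δ * s)) :=
    Real.continuous_exp.comp (continuous_const.mul continuous_id)
  have hmes_dp : ∀ k (μ : Measure ℝ),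
      AEStronglyMeasurable (fun s => ‖deriv (f k) s‖ ^ p * Real.exp (p*δ*s)) μ := by
    intro k μ
    exact ((Real.continuous_rpow_const hp0.le).comp_aestronglyMeasurable
      (hmes_d k μ)).mul hexp_cont.aestronglyMeasurable
  have hmes_fp : ∀ k (μ : Measure ℝ),
      AEStronglyMeasurable (fun s => ‖f k s‖ ^ p * Real.exp (p*δ*s)) μ := by
    intro k μ
    exact ((Real.continuous_rpow_const hp0.le).comp_aestronglyMeasurable
      (hmes_f k μ)).mul hexp_cont.aestronglyMeasurable
  -- integrability of the separate weighted powers on `Ioi 0`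
  have hptwise_d : ∀ k s, ‖deriv (f k) s‖ ^ p * Real.exp (p*δ*s)
      ≤ (‖f k s‖ ^ p + ‖deriv (f k) s‖ ^ p) * Real.exp (p * δ * s) := by
    intro k s
    have h1 := Real.rpow_nonneg (norm_nonneg (f k s)) p
    nlinarith [Real.exp_pos (p*δ*s)]
  have hptwise_f : ∀ k s, ‖f k s‖ ^ p * Real.exp (p*δ*s)
      ≤ (‖f k s‖ ^ p + ‖deriv (f k) s‖ ^ p) * Real.exp (p * δ * s) := by
    intro k s
    have h1 := Real.rpow_nonneg (norm_nonneg (deriv (f k) s)) p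
    nlinarith [Real.exp_pos (p*δ*s)]
  have hint_d : ∀ k, IntegrableOn (fun s => ‖deriv (f k) s‖ ^ p * Real.exp (p*δ*s)) (Ioi 0) := by
    intro k
    exact integrable_mono_real (hint k) (hmes_dp k _)
      (Eventually.of_forall fun s => mul_nonneg (Real.rpow_nonneg (norm_nonneg _) _)
        (Real.exp_pos _).le)
      (Eventually.of_forall fun s => hptwise_d k s)
  have hint_fw : ∀ k, IntegrableOn (fun s => ‖f k s‖ ^ p * Real.exp (p*δ*s)) (Ioi 0) := by
    intro k
    exact integrable_mono_real (hint k) (hmes_fp k _)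
      (Eventually.of_forall fun s => mul_nonneg (Real.rpow_nonneg (norm_nonneg _) _)
        (Real.exp_pos _).le)
      (Eventually.of_forall fun s => hptwise_f k s)
  -- tail bounds: weighted integrals over `Ioc a b` are `≤ C`
  have hsub : ∀ {a b : ℝ}, 0 ≤ a → Ioc a b ⊆ Ioi (0:ℝ) :=
    fun {a b} ha x hx => lt_of_le_of_lt ha hx.1
  have htail_d : ∀ k (a b : ℝ), 0 ≤ a →
      ∫ s in Ioc a b, ‖deriv (f k) s‖ ^ p * Real.exp (p*δ*s) ≤ C := by
    intro k a b ha
    have h1 : ∫ s in Ioc a b, ‖deriv (f k) s‖ ^ p * Real.exp (p*δ*s)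
        ≤ ∫ s in Ioi 0, ‖deriv (f k) s‖ ^ p * Real.exp (p*δ*s) :=
      setIntegral_mono_set (hint_d k)
        (Eventually.of_forall fun s => mul_nonneg (Real.rpow_nonneg (norm_nonneg _) _)
          (Real.exp_pos _).le)
        (HasSubset.Subset.eventuallyLE (hsub ha))
    refine h1.trans (le_trans ?_ (hbdd k))
    exact integral_mono (hint_d k) (hint k) fun s => hptwise_d k s
  have htail_f : ∀ k (a b : ℝ), 0 ≤ a →
      ∫ s in Ioc a b, ‖f k s‖ ^ p * Real.exp (p*δ*s) ≤ C := by
    intro k a b ha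
    have h1 : ∫ s in Ioc a b, ‖f k s‖ ^ p * Real.exp (p*δ*s)
        ≤ ∫ s in Ioi 0, ‖f k s‖ ^ p * Real.exp (p*δ*s) :=
      setIntegral_mono_set (hint_fw k)
        (Eventually.of_forall fun s => mul_nonneg (Real.rpow_nonneg (norm_nonneg _) _)
          (Real.exp_pos _).le)
        (HasSubset.Subset.eventuallyLE (hsub ha))
    refine h1.trans (le_trans ?_ (hbdd k))
    exact integral_mono (hint_fw k) (hint k) fun s => hptwise_f k s
  -- plain norm integrability on bounded intervals
  have hn1_d : ∀ k (a b : ℝ), 0 ≤ a → IntegrableOn (fun s => ‖deriv (f k) s‖) (Ioc a b) :=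
    fun k a b ha => integrable_norm_of_rpow hp hδ ha (hmes_d k _) ((hint_d k).mono_set (hsub ha))
  have hn1_f : ∀ k (a b : ℝ), 0 ≤ a → IntegrableOn (fun s => ‖f k s‖) (Ioc a b) :=
    fun k a b ha => integrable_norm_of_rpow hp hδ ha (hmes_f k _) ((hint_fw k).mono_set (hsub ha))
  -- fundamental theorem of calculus bound
  have hftc : ∀ k (a t : ℝ), 0 ≤ a → a ≤ t →
      ‖f k t - f k a‖ ≤ ∫ s in Ioc a t, ‖deriv (f k) s‖ := by
    intro k a t ha hat
    have hii : IntervalIntegrable (deriv (f k)) volume a t := by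
      rw [intervalIntegrable_iff_integrableOn_Ioc_of_le hat]
      exact (integrable_norm_iff (aestronglyMeasurable_deriv (f k) _)).mp (hn1_d k a t ha)
    have heq := intervalIntegral.integral_deriv_eq_sub
      (fun x _ => (hdiff k) x) hii
    calc ‖f k t - f k a‖ = ‖∫ s in a..t, deriv (f k) s‖ := by rw [heq]
      _ ≤ ∫ s in a..t, ‖deriv (f k) s‖ := intervalIntegral.norm_integral_le_integral_norm hat
      _ = ∫ s in Ioc a t, ‖deriv (f k) s‖ := intervalIntegral.integral_of_le hat
  -- the basic Hölder-with-decay bound for the derivative on (a, b]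
  have hd_decay : ∀ k (a b : ℝ), 0 ≤ a →
      ∫ s in Ioc a b, ‖deriv (f k) s‖ ≤ C ^ (1/p) * ((q*δ)⁻¹) ^ (1/q) * Real.exp (-(δ*a)) :=
    fun k a b ha => holder_decay hpq hδ (hmes_d k _) (fun s => norm_nonneg _)
      ((hint_d k).mono_set (hsub ha)) (htail_d k a b ha)
  have hf_decay : ∀ k (a b : ℝ), 0 ≤ a →
      ∫ s in Ioc a b, ‖f k s‖ ≤ C ^ (1/p) * ((q*δ)⁻¹) ^ (1/q) * Real.exp (-(δ*a)) :=
    fun k a b ha => holder_decay hpq hδ (hmes_f k _) (fun s => norm_nonneg _)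
      ((hint_fw k).mono_set (hsub ha)) (htail_f k a b ha)
  -- pointwise exponential decay
  set D1 : ℝ := C ^ (1/p) * ((q*δ)⁻¹) ^ (1/q) with hD1def
  have hD1 : 0 ≤ D1 := mul_nonneg (Real.rpow_nonneg hC0 _)
    (Real.rpow_nonneg (inv_nonneg.mpr hqδ.le) _)
  set D : ℝ := 2 * D1 with hDdef
  have hD0 : 0 ≤ D := by positivity
  have hdecay : ∀ k (a : ℝ), 0 ≤ a → ‖f k a‖ ≤ D * Real.exp (-(δ * a)) := by
    intro k a ha
    have hIf : IntegrableOn (fun s => ‖f k s‖) (Ioc a (a+1)) := hn1_f k a (a+1) ha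
    have hmono_t : ∀ t ∈ Ioc a (a+1), ‖f k a‖ ≤ ‖f k t‖ + D1 * Real.exp (-(δ*a)) := by
      intro t ht
      have h1 : ‖f k a‖ ≤ ‖f k t‖ + ‖f k t - f k a‖ := by
        have := norm_sub_norm_le (f k t) (f k a)
        have h2 := norm_sub_rev (f k t) (f k a)
        nlinarith [norm_nonneg (f k t - f k a), norm_sub_norm_le (f k a) (f k t),
          norm_sub_rev (f k a) (f k t)]
      refine h1.trans (add_le_add_right ?_ _)
      refine (hftc k a t ha ht.1.le).trans ?_
      have h3 : ∫ s in Ioc a t, ‖deriv (f k) s‖ ≤ ∫ s in Ioc a (a+1), ‖deriv (f k) s‖ :=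
        setIntegral_mono_set (hn1_d k a (a+1) ha)
          (Eventually.of_forall fun s => norm_nonneg _)
          (HasSubset.Subset.eventuallyLE (Ioc_subset_Ioc_right ht.2))
      exact h3.trans (hd_decay k a (a+1) ha)
    have hstep : ‖f k a‖ = ∫ _ in Ioc a (a+1), ‖f k a‖ := by
      rw [setIntegral_const, Real.volume_real_Ioc, smul_eq_mul]
      norm_num
    calc ‖f k a‖ = ∫ _ in Ioc a (a+1), ‖f k a‖ := hstep
      _ ≤ ∫ t in Ioc a (a+1), (‖f k t‖ + D1 * Real.exp (-(δ*a))) := by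
          refine setIntegral_mono_on (integrableOn_const measure_Ioc_lt_top.ne)
            (hIf.add (integrableOn_const measure_Ioc_lt_top.ne))
            measurableSet_Ioc hmono_t
      _ = (∫ t in Ioc a (a+1), ‖f k t‖) + D1 * Real.exp (-(δ*a)) := by
          rw [integral_add hIf (integrableOn_const measure_Ioc_lt_top.ne),
            setIntegral_const, Real.volume_real_Ioc, smul_eq_mul]
          norm_num
      _ ≤ D1 * Real.exp (-(δ*a)) + D1 * Real.exp (-(δ*a)) := by
          have := hf_decay k a (a+1) ha
          linarith
      _ = D * Real.exp (-(δ * a)) := by rw [hDdef]; ring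
  -- uniform Hölder continuity
  have hhold : ∀ k (a b : ℝ), 0 ≤ a → a ≤ b →
      ‖f k b - f k a‖ ≤ C ^ (1/p) * (b - a) ^ (1/q) := by
    intro k a b ha hab
    refine (hftc k a b ha hab).trans ?_
    refine holder_flat hpq hab (hmes_d k _) (fun s => norm_nonneg _) ?_ ?_
    · refine integrable_mono_real (g := fun s => ‖deriv (f k) s‖ ^ p * Real.exp (p*δ*s))
        ((hint_d k).mono_set (hsub ha))
        ((Real.continuous_rpow_const hp0.le).comp_aestronglyMeasurable (hmes_d k _))
        (Eventually.of_forall fun s => Real.rpow_nonneg (norm_nonneg _) _) ?_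
      filter_upwards [ae_restrict_mem measurableSet_Ioc] with s hs
      have hs0 : (0:ℝ) ≤ s := ha.trans hs.1.le
      have he : 1 ≤ Real.exp (p*δ*s) := by
        rw [← Real.exp_zero]
        exact Real.exp_le_exp.mpr (by positivity)
      nlinarith [Real.rpow_nonneg (norm_nonneg (deriv (f k) s)) p]
    · have h1 : ∫ s in Ioc a b, ‖deriv (f k) s‖ ^ p
          ≤ ∫ s in Ioc a b, ‖deriv (f k) s‖ ^ p * Real.exp (p*δ*s) := by
        refine setIntegral_mono_on ?_ ((hint_d k).mono_set (hsub ha)) measurableSet_Ioc ?_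
        · refine integrable_mono_real (g := fun s => ‖deriv (f k) s‖ ^ p * Real.exp (p*δ*s))
            ((hint_d k).mono_set (hsub ha))
            ((Real.continuous_rpow_const hp0.le).comp_aestronglyMeasurable (hmes_d k _))
            (Eventually.of_forall fun s => Real.rpow_nonneg (norm_nonneg _) _) ?_
          filter_upwards [ae_restrict_mem measurableSet_Ioc] with s hs
          have hs0 : (0:ℝ) ≤ s := ha.trans hs.1.le
          have he : 1 ≤ Real.exp (p*δ*s) := by
            rw [← Real.exp_zero]
            exact Real.exp_le_exp.mpr (by positivity)
          nlinarith [Real.rpow_nonneg (norm_nonneg (deriv (f k) s)) p]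
        · intro s hs
          have hs0 : (0:ℝ) ≤ s := ha.trans hs.1.le
          have he : 1 ≤ Real.exp (p*δ*s) := by
            rw [← Real.exp_zero]
            exact Real.exp_le_exp.mpr (by positivity)
          nlinarith [Real.rpow_nonneg (norm_nonneg (deriv (f k) s)) p]
      exact h1.trans (htail_d k a b ha)
    -- a pointwise convergent subsequence via compactness of a product of closed balls
  have hexp_le_one : ∀ {t : ℝ}, 0 ≤ t → Real.exp (-(δ * t)) ≤ 1 := by
    intro t ht
    rw [← Real.exp_zero]
    exact Real.exp_le_exp.mpr (by nlinarith)
  set S : Set (ℚ → ℂ) := univ.pi fun _ => Metric.closedBall 0 D with hSdef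
  have hScomp : IsCompact S := isCompact_univ_pi fun _ => isCompact_closedBall 0 D
  have hy : ∀ k, (fun r : ℚ => f k (max (r:ℝ) 0)) ∈ S := by
    intro k
    rw [hSdef, Set.mem_univ_pi]
    intro r
    rw [Metric.mem_closedBall, dist_zero_right]
    have h1 := hdecay k (max (r:ℝ) 0) (le_max_right _ _)
    have h2 := hexp_le_one (le_max_right (r:ℝ) 0)
    nlinarith
  obtain ⟨as, -, φ, hφ, hconv⟩ :=
    hScomp.tendsto_subseq (x := fun k => (fun r : ℚ => f k (max (r:ℝ) 0))) hy
  have hrat : ∀ r : ℚ, 0 ≤ (r:ℝ) → Tendsto (fun n => f (φ n) (r:ℝ)) atTop (𝓝 (as r)) := by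
    intro r hr
    have h1 := tendsto_pi_nhds.mp hconv r
    simpa [Function.comp, max_eq_left hr] using h1
  -- Cauchy at each point of [0, ∞)
  have hcauchy : ∀ x : ℝ, 0 ≤ x → ∃ z, Tendsto (fun n => f (φ n) x) atTop (𝓝 z) := by
    intro x hx
    apply cauchySeq_tendsto_of_complete
    rw [Metric.cauchySeq_iff]
    intro ε hε
    have hK1 : (0:ℝ) ≤ C ^ (1/p) := Real.rpow_nonneg hC0 _
    set η : ℝ := min 1 ((ε/(4*(C ^ (1/p)+1))) ^ q) with hηdef
    have hη : 0 < η := lt_min one_pos (Real.rpow_pos_of_pos (by positivity) q)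
    obtain ⟨r, hr1, hr2⟩ := exists_rat_btwn (lt_add_of_pos_right x hη)
    have hr0 : (0:ℝ) ≤ (r:ℝ) := hx.trans hr1.le
    have hsmall : ∀ k, ‖f k (r:ℝ) - f k x‖ ≤ ε/4 := by
      intro k
      refine (hhold k x r hx hr1.le).trans ?_
      have h5 : ((r:ℝ) - x) < (ε/(4*(C ^ (1/p)+1))) ^ q := by
        have h5a := min_le_right (1:ℝ) ((ε/(4*(C ^ (1/p)+1))) ^ q)
        rw [← hηdef] at h5a
        linarith
      have h6 : ((r:ℝ) - x) ^ (1/q) < ε/(4*(C ^ (1/p)+1)) := by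
        have h7 := Real.rpow_lt_rpow (sub_nonneg.mpr hr1.le) h5 (one_div_pos.mpr hq0)
        rwa [← Real.rpow_mul (by positivity : (0:ℝ) ≤ ε/(4*(C ^ (1/p)+1))),
          mul_one_div_cancel hq0.ne', Real.rpow_one] at h7
      have h8 : C ^ (1/p) * (ε / (4*(C ^ (1/p)+1))) ≤ ε / 4 := by
        rw [mul_comm, div_mul_eq_mul_div, div_le_div_iff₀ (by positivity) (by norm_num : (0:ℝ) < 4)]
        nlinarith
      calc C ^ (1/p) * ((r:ℝ) - x) ^ (1/q)
          ≤ C ^ (1/p) * (ε/(4*(C ^ (1/p)+1))) := mul_le_mul_of_nonneg_left h6.le hK1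
        _ ≤ ε/4 := h8
    have hc : CauchySeq (fun n => f (φ n) (r:ℝ)) := (hrat r hr0).cauchySeq
    obtain ⟨N, hN⟩ := Metric.cauchySeq_iff.mp hc (ε/4) (by positivity)
    refine ⟨N, fun m hm n hn => ?_⟩
    have tri := dist_triangle4 (f (φ m) x) (f (φ m) (r:ℝ)) (f (φ n) (r:ℝ)) (f (φ n) x)
    have e1 : dist (f (φ m) x) (f (φ m) (r:ℝ)) ≤ ε/4 := by
      rw [dist_eq_norm, norm_sub_rev]
      exact hsmall (φ m)
    have e3 : dist (f (φ n) (r:ℝ)) (f (φ n) x) ≤ ε/4 := by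
      rw [dist_eq_norm]
      exact hsmall (φ n)
    have e2 := hN m hm n hn
    calc dist (f (φ m) x) (f (φ n) x)
        ≤ dist (f (φ m) x) (f (φ m) (r:ℝ)) + dist (f (φ m) (r:ℝ)) (f (φ n) (r:ℝ))
          + dist (f (φ n) (r:ℝ)) (f (φ n) x) := tri
      _ < ε := by linarith
  -- define the limit function
  have hsel : ∀ x : ℝ, ∃ z : ℂ, 0 ≤ x → Tendsto (fun n => f (φ n) x) atTop (𝓝 z) := by
    intro x
    by_cases hx : 0 ≤ x
    · obtain ⟨z, hz⟩ := hcauchy x hx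
      exact ⟨z, fun _ => hz⟩
    · exact ⟨0, fun h => absurd h hx⟩
  choose g hg using hsel
  have hgt : ∀ x : ℝ, x ∈ Ioi (0:ℝ) → Tendsto (fun n => f (φ n) x) atTop (𝓝 (g x)) :=
    fun x hx => hg x (le_of_lt hx)
  have hgbdd : ∀ x ∈ Ioi (0:ℝ), ‖g x‖ ≤ D * Real.exp (-(δ * x)) := by
    intro x hx
    exact le_of_tendsto ((hgt x hx).norm)
      (Eventually.of_forall fun n => hdecay (φ n) x (le_of_lt hx))
  set μ0 := volume.restrict (Ioi (0:ℝ)) with hμ0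
  have haet : ∀ᵐ x ∂μ0, Tendsto (fun n => f (φ n) x) atTop (𝓝 (g x)) := by
    filter_upwards [ae_restrict_mem measurableSet_Ioi] with x hx using hgt x hx
  have hgmeas : AEStronglyMeasurable g μ0 :=
    aestronglyMeasurable_of_tendsto_ae atTop
      (fun n => ((hdiff (φ n)).continuous.aestronglyMeasurable)) haet
  have hint_exp : IntegrableOn (fun x : ℝ => Real.exp (-(p*δ) * x)) (Ioi 0) :=
    exp_neg_integrableOn_Ioi 0 (by positivity)
  have hmem_f : ∀ k, MemLp (f k) (ENNReal.ofReal p) μ0 := by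
    intro k
    refine memLp_of_integrable_rpow hp0 (hdiff k).continuous.aestronglyMeasurable ?_
    refine integrable_mono_real (g := fun s => ‖f k s‖ ^ p * Real.exp (p*δ*s)) (hint_fw k)
      ((Real.continuous_rpow_const hp0.le).comp_aestronglyMeasurable (hmes_f k _))
      (Eventually.of_forall fun s => Real.rpow_nonneg (norm_nonneg _) _) ?_
    filter_upwards [ae_restrict_mem measurableSet_Ioi] with s hs
    have hs0 : (0:ℝ) ≤ s := le_of_lt hs
    have he : 1 ≤ Real.exp (p*δ*s) := by
      rw [← Real.exp_zero]
      exact Real.exp_le_exp.mpr (by positivity)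
    nlinarith [Real.rpow_nonneg (norm_nonneg (f k s)) p]
  have hgmem : MemLp g (ENNReal.ofReal p) μ0 := by
    refine memLp_of_integrable_rpow hp0 hgmeas ?_
    refine integrable_mono_real (g := fun x => D ^ p * Real.exp (-(p*δ) * x))
      (hint_exp.const_mul _)
      ((Real.continuous_rpow_const hp0.le).comp_aestronglyMeasurable hgmeas.norm)
      (Eventually.of_forall fun s => Real.rpow_nonneg (norm_nonneg _) _) ?_
    filter_upwards [ae_restrict_mem measurableSet_Ioi] with x hx
    have h1 : ‖g x‖ ^ p ≤ (D * Real.exp (-(δ*x))) ^ p :=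
      Real.rpow_le_rpow (norm_nonneg _) (hgbdd x hx) hp0.le
    refine h1.trans_eq ?_
    rw [Real.mul_rpow hD0 (Real.exp_pos _).le, ← Real.exp_mul]
    ring_nf
  -- dominated convergence
  have hdct0 : Tendsto (fun n => ∫ x, ‖f (φ n) x - g x‖ ^ p ∂μ0) atTop
      (𝓝 (∫ _, (0:ℝ) ∂μ0)) := by
    refine tendsto_integral_of_dominated_convergence
      (fun x => (2*D) ^ p * Real.exp (-(p*δ) * x)) ?_ ?_ ?_ ?_
    · intro n
      exact ((Real.continuous_rpow_const hp0.le).comp_aestronglyMeasurable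
        (((hdiff (φ n)).continuous.aestronglyMeasurable.sub hgmeas).norm))
    · exact hint_exp.const_mul _
    · intro n
      filter_upwards [ae_restrict_mem measurableSet_Ioi] with x hx
      rw [Real.norm_eq_abs, abs_of_nonneg (Real.rpow_nonneg (norm_nonneg _) _)]
      have h1 : ‖f (φ n) x - g x‖ ≤ 2 * D * Real.exp (-(δ*x)) := by
        have h2 := norm_sub_le (f (φ n) x) (g x)
        have h3 := hdecay (φ n) x (le_of_lt hx)
        have h4 := hgbdd x hx
        linarith
      have h4 : ‖f (φ n) x - g x‖ ^ p ≤ (2*D*Real.exp (-(δ*x))) ^ p :=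
        Real.rpow_le_rpow (norm_nonneg _) h1 hp0.le
      refine h4.trans_eq ?_
      rw [Real.mul_rpow (by positivity) (Real.exp_pos _).le, ← Real.exp_mul]
      ring_nf
    · filter_upwards [ae_restrict_mem measurableSet_Ioi] with x hx
      have h1 : Tendsto (fun n => f (φ n) x - g x) atTop (𝓝 0) := by
        simpa using (hgt x hx).sub_const (g x)
      have h2 : Tendsto (fun n => ‖f (φ n) x - g x‖) atTop (𝓝 0) := by
        simpa using h1.norm
      have h3 := h2.rpow_const (Or.inr hp0.le)
      simpa [Real.zero_rpow hp0.ne'] using h3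
  have hdct : Tendsto (fun n => ∫ x in Ioi (0:ℝ), ‖f (φ n) x - g x‖ ^ p) atTop (𝓝 0) := by
    simpa using hdct0
  -- conclusion
  refine ⟨φ, hφ, g, hgmem, ?_⟩
  have hne0 : (ENNReal.ofReal p) ≠ 0 := by
    simp [ENNReal.ofReal_eq_zero, not_le, hp0]
  have hnetop : (ENNReal.ofReal p) ≠ ⊤ := ENNReal.ofReal_ne_top
  have heq : ∀ n, eLpNorm (f (φ n) - g) (ENNReal.ofReal p) μ0
      = ENNReal.ofReal ((∫ x in Ioi (0:ℝ), ‖f (φ n) x - g x‖ ^ p) ^ p⁻¹) := by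
    intro n
    have hmemn : MemLp (f (φ n) - g) (ENNReal.ofReal p) μ0 := (hmem_f (φ n)).sub hgmem
    rw [hmemn.eLpNorm_eq_integral_rpow_norm hne0 hnetop]
    congr 1
    simp only [ENNReal.toReal_ofReal hp0.le, Pi.sub_apply, hμ0]
  have hmain : Tendsto
      (fun n => ENNReal.ofReal ((∫ x in Ioi (0:ℝ), ‖f (φ n) x - g x‖ ^ p) ^ p⁻¹))
      atTop (𝓝 0) := by
    have h1 := hdct.rpow_const (Or.inr (inv_nonneg.mpr hp0.le))
    rw [Real.zero_rpow (inv_ne_zero hp0.ne')] at h1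
    have h2 := (ENNReal.continuous_ofReal.tendsto 0).comp h1
    simpa [Function.comp_def] using h2
  exact hmain.congr fun n => (heq n).symm
end

section
/- Let A be a closed, densely defined operator of the form D = ∂_s + A on L²(ℝ, H) where A is self-adjoint on the Hilbert space H with spectrum contained in ℝ \ (−ε, ε) for some ε > 0. Then for every x in the domain, ‖x‖_{L²(ℝ,H)} ≤ (1/ε)‖Dx‖_{L²(ℝ,H)}. -/
open MeasureTheory
open scoped RealInnerProductSpace ENNReal

section SpectralGapAux

variable {H : Type*} [NormedAddCommGroup H] [InnerProductSpace ℝ H] [CompleteSpace H]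

set_option linter.unusedSectionVars false

/-- Cauchy–Schwarz inequality for a positive symmetric operator. -/
private lemma cs_positive {C : H →L[ℝ] H}
    (hsym : ∀ u w : H, ⟪C u, w⟫ = ⟪u, C w⟫)
    (hpos : ∀ u : H, 0 ≤ ⟪C u, u⟫) (v w : H) :
    ⟪C v, w⟫ ^ 2 ≤ ⟪C v, v⟫ * ⟪C w, w⟫ := by
  have hswap : ⟪C w, v⟫ = ⟪C v, w⟫ := by
    rw [hsym w v, real_inner_comm]
  have key : ∀ t : ℝ, 0 ≤ ⟪C w, w⟫ * (t * t) + (2 * ⟪C v, w⟫) * t + ⟪C v, v⟫ := by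
    intro t
    have h0 := hpos (v + t • w)
    have e1 : ⟪C (v + t • w), v + t • w⟫ =
        ⟪C w, w⟫ * (t * t) + (2 * ⟪C v, w⟫) * t + ⟪C v, v⟫ := by
      simp only [map_add, _root_.map_smul, inner_add_left, inner_add_right,
        real_inner_smul_left, real_inner_smul_right]
      rw [hswap]; ring
    linarith [e1 ▸ h0]
  have hd := discrim_le_zero key
  rw [discrim] at hd
  nlinarith [hd]

set_option maxHeartbeats 1000000 in
/-- Spectral gap implies coercivity: `ε‖v‖ ≤ ‖A v‖`. -/
private lemma coercive_of_spectral_gap {A : H →L[ℝ] H} (hA : IsSelfAdjoint A)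
    {ε : ℝ} (hε : 0 < ε) (hspec : spectrum ℝ A ∩ Set.Ioo (-ε) ε = ∅) (v : H) :
    ε * ‖v‖ ≤ ‖A v‖ := by
  rcases eq_or_ne v 0 with rfl | hv
  · simp
  have hsymA : ∀ u w : H, ⟪A u, w⟫ = ⟪u, A w⟫ :=
    ContinuousLinearMap.isSelfAdjoint_iff_isSymmetric.mp hA
  have hunit : ∀ u : H, u ≠ 0 → ‖(‖u‖⁻¹ : ℝ) • u‖ = 1 := by
    intro u hu
    have hu0 : (0 : ℝ) < ‖u‖ := norm_pos_iff.mpr hu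
    rw [norm_smul, Real.norm_eq_abs, abs_of_nonneg (by positivity)]
    field_simp
  set S : Set ℝ := {r | ∃ u : H, ‖u‖ = 1 ∧ r = ‖A u‖ ^ 2} with hSdef
  have hne : S.Nonempty := ⟨‖A ((‖v‖⁻¹ : ℝ) • v)‖ ^ 2, ⟨_, hunit v hv, rfl⟩⟩
  have hbdd : BddBelow S := ⟨0, by rintro r ⟨u, hu, rfl⟩; positivity⟩
  set m := sInf S with hmdef
  have hm0 : 0 ≤ m := le_csInf hne (by rintro r ⟨u, hu, rfl⟩; positivity)
  have hmle : ∀ u : H, m * ‖u‖ ^ 2 ≤ ‖A u‖ ^ 2 := by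
    intro u
    rcases eq_or_ne u 0 with rfl | hu
    · simp
    · have hu0 : (0 : ℝ) < ‖u‖ := norm_pos_iff.mpr hu
      have h1 : m ≤ ‖A ((‖u‖⁻¹ : ℝ) • u)‖ ^ 2 :=
        csInf_le hbdd ⟨_, hunit u hu, rfl⟩
      have h2 : ‖A ((‖u‖⁻¹ : ℝ) • u)‖ ^ 2 = (‖u‖⁻¹) ^ 2 * ‖A u‖ ^ 2 := by
        rw [_root_.map_smul, norm_smul, mul_pow]
        congr 1
        rw [Real.norm_eq_abs, abs_of_nonneg (by positivity)]
      rw [h2] at h1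
      have h3 : m * ‖u‖ ^ 2 ≤ (‖u‖⁻¹) ^ 2 * ‖A u‖ ^ 2 * ‖u‖ ^ 2 :=
        mul_le_mul_of_nonneg_right h1 (by positivity)
      have h4 : (‖u‖⁻¹) ^ 2 * ‖A u‖ ^ 2 * ‖u‖ ^ 2 = ‖A u‖ ^ 2 := by
        field_simp
      linarith [h4 ▸ h3]
  have hεm : ε ^ 2 ≤ m := by
    by_contra hlt
    push_neg at hlt
    set l := Real.sqrt m with hldef
    have hl0 : 0 ≤ l := Real.sqrt_nonneg m
    have hll : l * l = m := Real.mul_self_sqrt hm0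
    have hlε : l < ε := (Real.sqrt_lt' hε).mpr hlt
    have hUnit : ∀ μ : ℝ, μ ∈ Set.Ioo (-ε) ε →
        IsUnit (algebraMap ℝ (H →L[ℝ] H) μ - A) := by
      intro μ hμ
      by_contra hnu
      have hmem : μ ∈ spectrum ℝ A := spectrum.mem_iff.mpr hnu
      have : μ ∈ spectrum ℝ A ∩ Set.Ioo (-ε) ε := ⟨hmem, hμ⟩
      rw [hspec] at this
      exact this
    have h1 : IsUnit (algebraMap ℝ (H →L[ℝ] H) l - A) :=
      hUnit l ⟨by linarith, hlε⟩
    have h2 : IsUnit (algebraMap ℝ (H →L[ℝ] H) (-l) - A) :=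
      hUnit (-l) ⟨by linarith, by linarith⟩
    set C : H →L[ℝ] H :=
      (algebraMap ℝ (H →L[ℝ] H) l - A) * (algebraMap ℝ (H →L[ℝ] H) (-l) - A) with hCdef
    have hCu : IsUnit C := h1.mul h2
    have hCapp : ∀ u : H, C u = A (A u) - (l * l) • u := by
      intro u
      rw [hCdef]
      simp only [ContinuousLinearMap.mul_apply, Algebra.algebraMap_eq_smul_one,
        ContinuousLinearMap.sub_apply, ContinuousLinearMap.smul_apply,
        ContinuousLinearMap.one_apply, map_sub, _root_.map_smul]
      module
    have hCval : ∀ u : H, ⟪C u, u⟫ = ‖A u‖ ^ 2 - m * ‖u‖ ^ 2 := by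
      intro u
      rw [hCapp u, inner_sub_left, real_inner_smul_left, hsymA (A u) u,
        real_inner_self_eq_norm_sq, real_inner_self_eq_norm_sq, hll]
    have hCpos : ∀ u : H, 0 ≤ ⟪C u, u⟫ := by
      intro u; rw [hCval u]; linarith [hmle u]
    have hCsym : ∀ u w : H, ⟪C u, w⟫ = ⟪u, C w⟫ := by
      intro u w
      rw [hCapp u, hCapp w, inner_sub_left, inner_sub_right,
        real_inner_smul_left, real_inner_smul_right,
        hsymA (A u) w, hsymA u (A w)]
    obtain ⟨U, hU⟩ := hCu
    set B : H →L[ℝ] H := (↑U⁻¹ : H →L[ℝ] H) with hBdef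
    have hBC : ∀ u : H, B (C u) = u := by
      intro u
      have h := congrArg (fun T : H →L[ℝ] H => T u) U.inv_mul
      simpa [hU, ContinuousLinearMap.mul_apply] using h
    have hBnorm : ∀ u : H, ‖u‖ ≤ ‖B‖ * ‖C u‖ := by
      intro u
      calc ‖u‖ = ‖B (C u)‖ := by rw [hBC u]
        _ ≤ ‖B‖ * ‖C u‖ := B.le_opNorm _
    have hB0 : 0 < ‖B‖ := by
      have h := hBnorm ((‖v‖⁻¹ : ℝ) • v)
      rw [hunit v hv] at h
      by_contra h0
      push_neg at h0
      have hB : ‖B‖ = 0 := le_antisymm h0 (norm_nonneg _)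
      rw [hB, zero_mul] at h
      linarith
    set δ : ℝ := 1 / (‖B‖ ^ 2 * (‖C‖ + 1)) with hδdef
    have hC0 : (0 : ℝ) ≤ ‖C‖ := norm_nonneg C
    have hδpos : 0 < δ := by positivity
    have hδm : δ * (‖B‖ ^ 2 * (‖C‖ + 1)) = 1 := by
      rw [hδdef]; field_simp
    obtain ⟨r, ⟨u, hu1, rfl⟩, hrlt⟩ :=
      exists_lt_of_csInf_lt hne (show sInf S < m + δ by rw [← hmdef]; linarith)
    have hd0 : 0 ≤ ⟪C u, u⟫ := hCpos u
    have hdlt : ⟪C u, u⟫ < δ := by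
      rw [hCval u, hu1]; simp only [one_pow, mul_one]; linarith
    have hlb : 1 ≤ ‖B‖ * ‖C u‖ := by
      have h := hBnorm u; rw [hu1] at h; exact h
    have hCupos : 0 < ‖C u‖ := by
      rcases lt_or_ge 0 ‖C u‖ with h | h
      · exact h
      · have h0 : ‖C u‖ = 0 := le_antisymm h (norm_nonneg _)
        rw [h0, mul_zero] at hlb
        linarith
    have hcs := cs_positive hCsym hCpos u (C u)
    have hinner1 : ⟪C u, C u⟫ = ‖C u‖ ^ 2 := real_inner_self_eq_norm_sq _
    have hinner2 : ⟪C (C u), C u⟫ ≤ ‖C‖ * ‖C u‖ ^ 2 := by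
      calc ⟪C (C u), C u⟫ ≤ ‖C (C u)‖ * ‖C u‖ := real_inner_le_norm _ _
        _ ≤ (‖C‖ * ‖C u‖) * ‖C u‖ :=
            mul_le_mul_of_nonneg_right (C.le_opNorm _) (norm_nonneg _)
        _ = ‖C‖ * ‖C u‖ ^ 2 := by ring
    have hkey : ‖C u‖ ^ 2 * ‖C u‖ ^ 2 ≤ (⟪C u, u⟫ * ‖C‖) * ‖C u‖ ^ 2 := by
      calc ‖C u‖ ^ 2 * ‖C u‖ ^ 2 = (‖C u‖ ^ 2) ^ 2 := by ring
        _ = ⟪C u, C u⟫ ^ 2 := by rw [hinner1]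
        _ ≤ ⟪C u, u⟫ * ⟪C (C u), C u⟫ := hcs
        _ ≤ ⟪C u, u⟫ * (‖C‖ * ‖C u‖ ^ 2) := mul_le_mul_of_nonneg_left hinner2 hd0
        _ = (⟪C u, u⟫ * ‖C‖) * ‖C u‖ ^ 2 := by ring
    have hq : ‖C u‖ ^ 2 ≤ ⟪C u, u⟫ * ‖C‖ :=
      le_of_mul_le_mul_right hkey (by positivity)
    have hq' : ‖C u‖ ^ 2 < δ * (‖C‖ + 1) := by
      have h1' : ⟪C u, u⟫ * ‖C‖ ≤ δ * ‖C‖ :=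
        mul_le_mul_of_nonneg_right hdlt.le hC0
      have h2' : δ * ‖C‖ < δ * (‖C‖ + 1) := by nlinarith
      linarith
    have hfin1 : 1 ≤ ‖B‖ ^ 2 * ‖C u‖ ^ 2 := by
      have h := mul_self_le_mul_self (by norm_num : (0 : ℝ) ≤ 1) hlb
      calc (1 : ℝ) = 1 * 1 := by ring
        _ ≤ (‖B‖ * ‖C u‖) * (‖B‖ * ‖C u‖) := h
        _ = ‖B‖ ^ 2 * ‖C u‖ ^ 2 := by ring
    have h3' : ‖B‖ ^ 2 * ‖C u‖ ^ 2 < ‖B‖ ^ 2 * (δ * (‖C‖ + 1)) :=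
      mul_lt_mul_of_pos_left hq' (by positivity)
    have h4' : ‖B‖ ^ 2 * (δ * (‖C‖ + 1)) = 1 := by
      have hcomm : ‖B‖ ^ 2 * (δ * (‖C‖ + 1)) = δ * (‖B‖ ^ 2 * (‖C‖ + 1)) := by ring
      rw [hcomm, hδm]
    linarith
  have hfinal : (ε * ‖v‖) ^ 2 ≤ ‖A v‖ ^ 2 := by
    have := hmle v
    nlinarith [sq_nonneg ‖v‖]
  nlinarith [hfinal, norm_nonneg (A v), mul_nonneg hε.le (norm_nonneg v)]

/-- Pointwise inner product of two `L²` functions is integrable. -/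
private lemma integrable_inner_of_memℒp {f g : ℝ → H}
    (hf : MemLp f 2 volume) (hg : MemLp g 2 volume) :
    Integrable (fun s => ⟪f s, g s⟫) volume := by
  have h := MeasureTheory.L2.integrable_inner (𝕜 := ℝ) (hf.toLp f) (hg.toLp g)
  apply h.congr
  filter_upwards [hf.coeFn_toLp, hg.coeFn_toLp] with s h1 h2
  rw [h1, h2]

private lemma integrable_norm_sq_of_memℒp {f : ℝ → H} (hf : MemLp f 2 volume) :
    Integrable (fun s => ‖f s‖ ^ 2) volume := by
  have h := integrable_inner_of_memℒp hf hf
  apply h.congr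
  filter_upwards with s
  rw [real_inner_self_eq_norm_sq]

private lemma eLpNorm_two_eq_ofReal {f : ℝ → H} (hf : MemLp f 2 volume) :
    eLpNorm f 2 volume =
      ENNReal.ofReal ((∫ s : ℝ, ‖f s‖ ^ 2) ^ ((2 : ℝ)⁻¹)) := by
  rw [hf.eLpNorm_eq_integral_rpow_norm two_ne_zero ENNReal.ofNat_ne_top]
  have htr : ((2 : ℝ≥0∞)).toReal = (2 : ℝ) := by simp
  rw [htr]
  congr 1
  congr 1
  apply integral_congr_ae
  filter_upwards with s
  rw [← Real.rpow_natCast (‖f s‖) 2]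
  norm_num

end SpectralGapAux

set_option maxHeartbeats 1000000 in
/-- **Spectral-gap estimate for `D = ∂_s + A`.**  If `A` is self-adjoint with
spectrum contained in `ℝ ∖ (−ε, ε)`, then `‖x‖_{L²(ℝ,H)} ≤ (1/ε) ‖x' + A x‖_{L²(ℝ,H)}`
for all `x` in the domain `W^{1,2}(ℝ,H)`. -/
theorem spectral_gap_estimate_dds_add_A
    {H : Type*} [NormedAddCommGroup H] [InnerProductSpace ℝ H] [CompleteSpace H]
    (A : H →L[ℝ] H) (hA : IsSelfAdjoint A) (ε : ℝ) (hε : 0 < ε)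
    (hspec : spectrum ℝ A ∩ Set.Ioo (-ε) ε = ∅) :
    ∀ x : ℝ → H, Differentiable ℝ x → MemLp x 2 volume →
      MemLp (deriv x) 2 volume →
      eLpNorm x 2 volume ≤
        ENNReal.ofReal (1 / ε) *
          eLpNorm (fun s => deriv x s + A (x s)) 2 volume := by
  intro x hdiff hx hy
  set y : ℝ → H := deriv x with hydef
  set z : ℝ → H := fun s => y s + A (x s) with hzdef
  have hsymA : ∀ u w : H, ⟪A u, w⟫ = ⟪u, A w⟫ :=
    ContinuousLinearMap.isSelfAdjoint_iff_isSymmetric.mp hA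
  have hAx : MemLp (fun s => A (x s)) 2 volume := by
    have := A.comp_memLp' hx
    exact this
  have hz : MemLp z 2 volume := hy.add hAx
  -- the cross term vanishes
  have hcross : ∫ s : ℝ, ⟪y s, A (x s)⟫ = 0 := by
    set g : ℝ → ℝ := fun s => ⟪x s, A (x s)⟫ with hgdef
    set G : ℝ → ℝ := fun s => 2 * ⟪y s, A (x s)⟫ with hGdef
    have hderiv : ∀ s : ℝ, HasDerivAt g (G s) s := by
      intro s
      have hx' : HasDerivAt x (y s) s := (hdiff s).hasDerivAt
      have hAx' : HasDerivAt (fun t => A (x t)) (A (y s)) s :=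
        A.hasFDerivAt.comp_hasDerivAt s hx'
      have h := hx'.inner ℝ hAx'
      refine h.congr_deriv ?_
      have hsw : ⟪x s, A (y s)⟫ = ⟪y s, A (x s)⟫ := by
        rw [← hsymA (x s) (y s)]
        exact real_inner_comm _ _
      rw [hGdef]
      simp only []
      rw [hsw]; ring
    have hGint : Integrable G volume := by
      have h := (integrable_inner_of_memℒp hy hAx).const_mul 2
      exact h
    have hgint : Integrable g volume := by
      have h1 := integrable_norm_sq_of_memℒp hx
      have h2 := integrable_norm_sq_of_memℒp hAx
      apply Integrable.mono' ((h1.add h2).const_mul (1 / 2 : ℝ))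
      · exact (integrable_inner_of_memℒp hx hAx).aestronglyMeasurable
      · filter_upwards with s
        rw [Real.norm_eq_abs]
        simp only [Pi.add_apply]
        have hgs : g s = ⟪x s, A (x s)⟫ := rfl
        rw [hgs]
        have hcs : |⟪x s, A (x s)⟫| ≤ ‖x s‖ * ‖A (x s)‖ :=
          abs_real_inner_le_norm _ _
        nlinarith [hcs, sq_nonneg (‖x s‖ - ‖A (x s)‖)]
    have hzero : ∫ s : ℝ, G s = 0 :=
      integral_eq_zero_of_hasDerivAt_of_integrable hderiv hGint hgint
    have heq : ∫ s : ℝ, G s = 2 * ∫ s : ℝ, ⟪y s, A (x s)⟫ := by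
      rw [hGdef]; exact integral_const_mul 2 _
    rw [heq] at hzero
    linarith
  -- expand the square
  have hy2 : Integrable (fun s => ‖y s‖ ^ 2) volume := integrable_norm_sq_of_memℒp hy
  have hAx2 : Integrable (fun s => ‖A (x s)‖ ^ 2) volume := integrable_norm_sq_of_memℒp hAx
  have hx2 : Integrable (fun s => ‖x s‖ ^ 2) volume := integrable_norm_sq_of_memℒp hx
  have hcrossint : Integrable (fun s => 2 * ⟪y s, A (x s)⟫) volume :=
    (integrable_inner_of_memℒp hy hAx).const_mul 2
  have hsum : ∫ s : ℝ, ‖z s‖ ^ 2 = (∫ s : ℝ, ‖y s‖ ^ 2) + ∫ s : ℝ, ‖A (x s)‖ ^ 2 := by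
    have hpt : ∀ s : ℝ, ‖z s‖ ^ 2 = ‖y s‖ ^ 2 + (2 * ⟪y s, A (x s)⟫ + ‖A (x s)‖ ^ 2) := by
      intro s
      rw [hzdef]
      simp only []
      rw [@norm_add_sq_real]
      ring
    calc ∫ s : ℝ, ‖z s‖ ^ 2
        = ∫ s : ℝ, (‖y s‖ ^ 2 + (2 * ⟪y s, A (x s)⟫ + ‖A (x s)‖ ^ 2)) :=
          integral_congr_ae (Filter.Eventually.of_forall hpt)
      _ = (∫ s : ℝ, ‖y s‖ ^ 2) + ∫ s : ℝ, (2 * ⟪y s, A (x s)⟫ + ‖A (x s)‖ ^ 2) :=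
          integral_add hy2 (hcrossint.add hAx2)
      _ = (∫ s : ℝ, ‖y s‖ ^ 2) + ((∫ s : ℝ, 2 * ⟪y s, A (x s)⟫) + ∫ s : ℝ, ‖A (x s)‖ ^ 2) := by
          rw [integral_add hcrossint hAx2]
      _ = (∫ s : ℝ, ‖y s‖ ^ 2) + ∫ s : ℝ, ‖A (x s)‖ ^ 2 := by
          rw [integral_const_mul, hcross]; ring_nf
  -- coercivity
  have hcoer : ∀ s : ℝ, ε ^ 2 * ‖x s‖ ^ 2 ≤ ‖A (x s)‖ ^ 2 := by
    intro s
    have h := coercive_of_spectral_gap hA hε hspec (x s)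
    nlinarith [mul_nonneg hε.le (norm_nonneg (x s))]
  have hmain : ε ^ 2 * ∫ s : ℝ, ‖x s‖ ^ 2 ≤ ∫ s : ℝ, ‖z s‖ ^ 2 := by
    have h1 : ε ^ 2 * ∫ s : ℝ, ‖x s‖ ^ 2 = ∫ s : ℝ, ε ^ 2 * ‖x s‖ ^ 2 :=
      (integral_const_mul _ _).symm
    have h2 : ∫ s : ℝ, ε ^ 2 * ‖x s‖ ^ 2 ≤ ∫ s : ℝ, ‖A (x s)‖ ^ 2 :=
      integral_mono (hx2.const_mul _) hAx2 hcoer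
    have h3 : (0 : ℝ) ≤ ∫ s : ℝ, ‖y s‖ ^ 2 :=
      integral_nonneg fun s => by positivity
    rw [h1, hsum]; linarith
  -- convert to eLpNorm
  have hIx : (0 : ℝ) ≤ ∫ s : ℝ, ‖x s‖ ^ 2 := integral_nonneg fun s => by positivity
  have hIz : (0 : ℝ) ≤ ∫ s : ℝ, ‖z s‖ ^ 2 := integral_nonneg fun s => by positivity
  have hEx : eLpNorm x 2 volume =
      ENNReal.ofReal ((∫ s : ℝ, ‖x s‖ ^ 2) ^ ((2 : ℝ)⁻¹)) := eLpNorm_two_eq_ofReal hx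
  have hEz : eLpNorm z 2 volume =
      ENNReal.ofReal ((∫ s : ℝ, ‖z s‖ ^ 2) ^ ((2 : ℝ)⁻¹)) := eLpNorm_two_eq_ofReal hz
  have hreal : (∫ s : ℝ, ‖x s‖ ^ 2) ^ ((2 : ℝ)⁻¹) ≤
      (1 / ε) * (∫ s : ℝ, ‖z s‖ ^ 2) ^ ((2 : ℝ)⁻¹) := by
    have hε2 : (0 : ℝ) < ε ^ 2 := by positivity
    have hle : ∫ s : ℝ, ‖x s‖ ^ 2 ≤ (1 / ε) ^ 2 * ∫ s : ℝ, ‖z s‖ ^ 2 := by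
      rw [div_pow, one_pow]
      rw [← le_div_iff₀' hε2] at hmain
      calc ∫ s : ℝ, ‖x s‖ ^ 2 ≤ (∫ s : ℝ, ‖z s‖ ^ 2) / ε ^ 2 := hmain
        _ = 1 / ε ^ 2 * ∫ s : ℝ, ‖z s‖ ^ 2 := by ring
    have h1 : (∫ s : ℝ, ‖x s‖ ^ 2) ^ ((2 : ℝ)⁻¹) ≤
        ((1 / ε) ^ 2 * ∫ s : ℝ, ‖z s‖ ^ 2) ^ ((2 : ℝ)⁻¹) :=
      Real.rpow_le_rpow hIx hle (by norm_num)
    have h2 : ((1 / ε) ^ 2 * ∫ s : ℝ, ‖z s‖ ^ 2) ^ ((2 : ℝ)⁻¹) =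
        (1 / ε) * (∫ s : ℝ, ‖z s‖ ^ 2) ^ ((2 : ℝ)⁻¹) := by
      rw [Real.mul_rpow (by positivity) hIz]
      congr 1
      rw [← Real.rpow_natCast (1 / ε) 2, ← Real.rpow_mul (by positivity)]
      norm_num
    rw [h2] at h1
    exact h1
  calc eLpNorm x 2 volume
      = ENNReal.ofReal ((∫ s : ℝ, ‖x s‖ ^ 2) ^ ((2 : ℝ)⁻¹)) := hEx
    _ ≤ ENNReal.ofReal ((1 / ε) * (∫ s : ℝ, ‖z s‖ ^ 2) ^ ((2 : ℝ)⁻¹)) :=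
        ENNReal.ofReal_le_ofReal hreal
    _ = ENNReal.ofReal (1 / ε) *
        ENNReal.ofReal ((∫ s : ℝ, ‖z s‖ ^ 2) ^ ((2 : ℝ)⁻¹)) :=
        ENNReal.ofReal_mul (by positivity)
    _ = ENNReal.ofReal (1 / ε) * eLpNorm z 2 volume := by rw [hEz]
end
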